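/- arXiv:1511.01114 — 2 statements merged into one kernel-verified Lean document; each statement's English description precedes it below -/
import Mathlib

section
/- For every p > 1, the series of absolute values of the Fourier cosine coefficients of cos_p(π_p ·) converges: ∑_{j=1}^∞ |b_j(p)| < ∞. -/
open Real Set

noncomputable def Fp (p y : ℝ) : ℝ := ∫ t in (0:ℝ)..y, (1 - t ^ p) ^ (-(1/p))

noncomputable def pip (p : ℝ) : ℝ := 2 * Fp p 1

section Helpers
open MeasureTheory intervalIntegral


private lemma shift_core {T δ : ℝ} (h K : ℝ → ℝ) (hδ : 0 < δ) (hδT : δ ≤ T)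
    (hint : IntervalIntegrable h volume 0 T)
    (hK : Continuous K) (hK1 : ∀ x, |K x| ≤ 1) (hKs : ∀ x, K (x + δ) = -K x) :
    2 * |∫ x in (0:ℝ)..T, h x * K x| ≤
      (∫ x in (0:ℝ)..(T - δ), |h x - h (x + δ)|) + (∫ x in (T - δ)..T, |h x|)
        + (∫ x in (0:ℝ)..δ, |h x|) := by
  have hT : (0:ℝ) ≤ T := le_trans hδ.le hδT
  have hTδ0 : (0:ℝ) ≤ T - δ := by linarith
  have hd : IntervalIntegrable (fun x => h (x + δ)) volume (-δ) (T - δ) := by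
    simpa using hint.comp_add_right δ
  have hsub1 : uIcc (0:ℝ) (T - δ) ⊆ uIcc 0 T :=
    uIcc_subset_uIcc (by simp [hT]) (by rw [Set.uIcc_of_le hT]; exact ⟨hTδ0, by linarith⟩)
  have hsub2 : uIcc (T - δ) T ⊆ uIcc 0 T :=
    uIcc_subset_uIcc (by rw [Set.uIcc_of_le hT]; exact ⟨hTδ0, by linarith⟩) (by simp [hT])
  have hsub3 : uIcc (0:ℝ) (T - δ) ⊆ uIcc (-δ) (T - δ) :=
    uIcc_subset_uIcc (by rw [Set.uIcc_of_le (by linarith : (-δ:ℝ) ≤ T - δ)]; constructor <;> linarith)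
      (by simp)
  have hsub4 : uIcc (-δ) (0:ℝ) ⊆ uIcc (-δ) (T - δ) :=
    uIcc_subset_uIcc (by simp)
      (by rw [Set.uIcc_of_le (by linarith : (-δ:ℝ) ≤ T - δ)]; constructor <;> linarith)
  have hg1 : IntervalIntegrable (fun x => h x * K x) volume 0 T :=
    hint.mul_continuousOn hK.continuousOn
  have hg2 : IntervalIntegrable (fun x => h (x + δ) * K x) volume (-δ) (T - δ) :=
    hd.mul_continuousOn hK.continuousOn
  have key : (∫ x in (0:ℝ)..T, h x * K x)
      = - ∫ x in (-δ)..(T - δ), h (x + δ) * K x := by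
    have h1 : (∫ x in (-δ)..(T - δ), h (x + δ) * K (x + δ)) = ∫ x in (0:ℝ)..T, h x * K x := by
      have := integral_comp_add_right (a := -δ) (b := T - δ) (fun u => h u * K u) δ
      simpa using this
    have h2 : (∫ x in (-δ)..(T - δ), h (x + δ) * K (x + δ))
        = ∫ x in (-δ)..(T - δ), -(h (x + δ) * K x) := by
      apply integral_congr; intro x _
      show h (x + δ) * K (x + δ) = -(h (x + δ) * K x)
      rw [hKs]; ring
    rw [← h1, h2, intervalIntegral.integral_neg]
  have split1 : (∫ x in (0:ℝ)..T, h x * K x)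
      = (∫ x in (0:ℝ)..(T - δ), h x * K x) + ∫ x in (T - δ)..T, h x * K x :=
    (integral_add_adjacent_intervals (hg1.mono_set hsub1) (hg1.mono_set hsub2)).symm
  have split2 : (∫ x in (-δ)..(T - δ), h (x + δ) * K x)
      = (∫ x in (-δ)..(0:ℝ), h (x + δ) * K x) + ∫ x in (0:ℝ)..(T - δ), h (x + δ) * K x :=
    (integral_add_adjacent_intervals (hg2.mono_set hsub4) (hg2.mono_set hsub3)).symm
  have e : (∫ x in (0:ℝ)..(T - δ), (h x - h (x + δ)) * K x)
      = (∫ x in (0:ℝ)..(T - δ), h x * K x) - ∫ x in (0:ℝ)..(T - δ), h (x + δ) * K x := by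
    rw [← integral_sub (hg1.mono_set hsub1) (hg2.mono_set hsub3)]
    apply integral_congr; intro x _
    show (h x - h (x + δ)) * K x = h x * K x - h (x + δ) * K x
    ring
  have key2 : (∫ x in (0:ℝ)..T, h x * K x)
      = -((∫ x in (-δ)..(0:ℝ), h (x + δ) * K x) + ∫ x in (0:ℝ)..(T - δ), h (x + δ) * K x) := by
    rw [key, split2]
  have combo : 2 * (∫ x in (0:ℝ)..T, h x * K x)
      = (∫ x in (0:ℝ)..(T - δ), (h x - h (x + δ)) * K x)
        + (∫ x in (T - δ)..T, h x * K x) - ∫ x in (-δ)..(0:ℝ), h (x + δ) * K x := by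
    rw [e]; linarith [split1, key2]
  have babs : ∀ (a b : ℝ) (f : ℝ → ℝ), a ≤ b → IntervalIntegrable f volume a b →
      |∫ x in a..b, f x * K x| ≤ ∫ x in a..b, |f x| := by
    intro a b f hab hf
    calc |∫ x in a..b, f x * K x| ≤ ∫ x in a..b, |f x * K x| :=
          intervalIntegral.abs_integral_le_integral_abs hab
      _ ≤ ∫ x in a..b, |f x| := by
          apply integral_mono_on hab ((hf.mul_continuousOn hK.continuousOn).abs) hf.abs
          intro x _
          rw [abs_mul]
          calc |f x| * |K x| ≤ |f x| * 1 := by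
                have := hK1 x
                nlinarith [abs_nonneg (f x)]
            _ = |f x| := mul_one _
  have b1 : |∫ x in (0:ℝ)..(T - δ), (h x - h (x + δ)) * K x|
      ≤ ∫ x in (0:ℝ)..(T - δ), |h x - h (x + δ)| :=
    babs _ _ _ hTδ0 ((hint.mono_set hsub1).sub (hd.mono_set hsub3))
  have b2 : |∫ x in (T - δ)..T, h x * K x| ≤ ∫ x in (T - δ)..T, |h x| :=
    babs _ _ _ (by linarith) (hint.mono_set hsub2)
  have b3 : |∫ x in (-δ)..(0:ℝ), h (x + δ) * K x| ≤ ∫ x in (0:ℝ)..δ, |h x| := by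
    have hb := babs (-δ) 0 (fun x => h (x + δ)) (by linarith) (hd.mono_set hsub4)
    have e2 : (∫ x in (-δ)..(0:ℝ), |h (x + δ)|) = ∫ x in (0:ℝ)..δ, |h x| := by
      have := integral_comp_add_right (a := -δ) (b := (0:ℝ)) (fun u => |h u|) δ
      simpa using this
    rw [← e2]; exact hb
  have triangle : ∀ A B C : ℝ, |A + B - C| ≤ |A| + |B| + |C| := by
    intro A B C
    have h1 := abs_add_le (A + B) (-C)
    have h2 := abs_add_le A B
    simp only [abs_neg] at h1
    calc |A + B - C| = |A + B + -C| := by ring_nf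
      _ ≤ |A + B| + |C| := h1
      _ ≤ |A| + |B| + |C| := by linarith
  calc 2 * |∫ x in (0:ℝ)..T, h x * K x| = |2 * ∫ x in (0:ℝ)..T, h x * K x| := by
        rw [abs_mul]; norm_num
    _ = |(∫ x in (0:ℝ)..(T - δ), (h x - h (x + δ)) * K x)
        + (∫ x in (T - δ)..T, h x * K x) - ∫ x in (-δ)..(0:ℝ), h (x + δ) * K x| := by rw [combo]
    _ ≤ |∫ x in (0:ℝ)..(T - δ), (h x - h (x + δ)) * K x|
        + |∫ x in (T - δ)..T, h x * K x| + |∫ x in (-δ)..(0:ℝ), h (x + δ) * K x| :=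
          triangle _ _ _
    _ ≤ _ := by linarith [b1, b2, b3]


private lemma aeneq (v : ℝ) : ∀ᵐ x : ℝ, x ≠ v := by
  have h : volume ({v} : Set ℝ) = 0 := Real.volume_singleton
  rw [← MeasureTheory.compl_mem_ae_iff] at h
  exact h

private lemma shift_mono {T δ : ℝ} (h K : ℝ → ℝ) (hδ : 0 < δ) (hδT : δ ≤ T)
    (hint : IntervalIntegrable h volume 0 T)
    (hK : Continuous K) (hK1 : ∀ x, |K x| ≤ 1) (hKs : ∀ x, K (x + δ) = -K x)
    (hmono : MonotoneOn h (Ioo 0 T)) (hpos : ∀ x ∈ Ioo 0 T, 0 ≤ h x) :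
    |∫ x in (0:ℝ)..T, h x * K x| ≤ ∫ x in (T - δ)..T, h x := by
  have hT : (0:ℝ) ≤ T := le_trans hδ.le hδT
  have hTδ0 : (0:ℝ) ≤ T - δ := by linarith
  have hd0 : IntervalIntegrable (fun x => h (x + δ)) volume 0 (T - δ) := by
    have := hint.comp_add_right δ
    apply this.mono_set
    apply uIcc_subset_uIcc
    · rw [Set.uIcc_of_le (by linarith : (0:ℝ) - δ ≤ T - δ)]; constructor <;> linarith
    · simp
  have hsub1 : uIcc (0:ℝ) (T - δ) ⊆ uIcc 0 T :=
    uIcc_subset_uIcc (by simp [hT]) (by rw [Set.uIcc_of_le hT]; exact ⟨hTδ0, by linarith⟩)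
  have hsub2 : uIcc (T - δ) T ⊆ uIcc 0 T :=
    uIcc_subset_uIcc (by rw [Set.uIcc_of_le hT]; exact ⟨hTδ0, by linarith⟩) (by simp [hT])
  have hsub5 : uIcc (0:ℝ) δ ⊆ uIcc 0 T :=
    uIcc_subset_uIcc (by simp [hT]) (by rw [Set.uIcc_of_le hT]; exact ⟨hδ.le, hδT⟩)
  have hsub6 : uIcc δ T ⊆ uIcc 0 T :=
    uIcc_subset_uIcc (by rw [Set.uIcc_of_le hT]; exact ⟨hδ.le, hδT⟩) (by simp [hT])
  have e1 : (∫ x in (0:ℝ)..(T - δ), |h x - h (x + δ)|)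
      = ∫ x in (0:ℝ)..(T - δ), (h (x + δ) - h x) := by
    apply intervalIntegral.integral_congr_ae
    filter_upwards [aeneq (T - δ)] with x hx hxI
    rw [Set.uIoc_of_le hTδ0] at hxI
    have hx1 : x ∈ Ioo (0:ℝ) T := ⟨hxI.1, by rcases lt_of_le_of_ne hxI.2 hx with h'; linarith⟩
    have hxlt : x < T - δ := lt_of_le_of_ne hxI.2 hx
    have hx2 : x + δ ∈ Ioo (0:ℝ) T := ⟨by linarith [hxI.1], by linarith⟩
    have hle : h x ≤ h (x + δ) := hmono hx1 hx2 (by linarith)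
    rw [abs_sub_comm, abs_of_nonneg (by linarith)]
  have e3 : (∫ x in (0:ℝ)..(T - δ), h (x + δ)) = ∫ x in δ..T, h x := by
    have := integral_comp_add_right (a := (0:ℝ)) (b := T - δ) h δ
    simpa using this
  have e4 : (∫ x in (0:ℝ)..δ, h x) + (∫ x in δ..T, h x) = ∫ x in (0:ℝ)..T, h x :=
    integral_add_adjacent_intervals (hint.mono_set hsub5) (hint.mono_set hsub6)
  have e5 : (∫ x in (0:ℝ)..(T - δ), h x) + (∫ x in (T - δ)..T, h x) = ∫ x in (0:ℝ)..T, h x :=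
    integral_add_adjacent_intervals (hint.mono_set hsub1) (hint.mono_set hsub2)
  have e2 : (∫ x in (0:ℝ)..(T - δ), (h (x + δ) - h x))
      = (∫ x in δ..T, h x) - ∫ x in (0:ℝ)..(T - δ), h x := by
    rw [integral_sub hd0 (hint.mono_set hsub1), e3]
  have e6 : (∫ x in (T - δ)..T, |h x|) = ∫ x in (T - δ)..T, h x := by
    apply intervalIntegral.integral_congr_ae
    filter_upwards [aeneq T] with x hx hxI
    rw [Set.uIoc_of_le (by linarith : T - δ ≤ T)] at hxI
    exact abs_of_nonneg (hpos x ⟨by linarith [hxI.1], lt_of_le_of_ne hxI.2 hx⟩)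
  have e7 : (∫ x in (0:ℝ)..δ, |h x|) = ∫ x in (0:ℝ)..δ, h x := by
    apply intervalIntegral.integral_congr_ae
    filter_upwards [aeneq δ] with x hx hxI
    rw [Set.uIoc_of_le hδ.le] at hxI
    have : x < δ := lt_of_le_of_ne hxI.2 hx
    exact abs_of_nonneg (hpos x ⟨hxI.1, by linarith⟩)
  have core := shift_core h K hδ hδT hint hK hK1 hKs
  rw [e1, e2, e6, e7] at core
  linarith [core, e4, e5]

private lemma shift_prod {T δ M : ℝ} (φ ψ K : ℝ → ℝ) (hδ : 0 < δ) (hδT : δ ≤ T) (hM : 0 ≤ M)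
    (hφc : ContinuousOn φ (Icc 0 T)) (hψc : ContinuousOn ψ (Icc 0 T))
    (hφm : MonotoneOn φ (Icc 0 T)) (hψm : AntitoneOn ψ (Icc 0 T))
    (hφb : ∀ x ∈ Icc (0:ℝ) T, 0 ≤ φ x ∧ φ x ≤ M) (hψb : ∀ x ∈ Icc (0:ℝ) T, 0 ≤ ψ x ∧ ψ x ≤ 1)
    (hK : Continuous K) (hK1 : ∀ x, |K x| ≤ 1) (hKs : ∀ x, K (x + δ) = -K x) :
    |∫ x in (0:ℝ)..T, (φ x * ψ x) * K x| ≤ 2 * (M * δ) := by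
  have hT : (0:ℝ) ≤ T := le_trans hδ.le hδT
  have hTδ0 : (0:ℝ) ≤ T - δ := by linarith
  have hIccsub1 : Icc (0:ℝ) (T - δ) ⊆ Icc 0 T := Icc_subset_Icc (le_refl _) (by linarith)
  have hIccsub2 : Icc (T - δ) T ⊆ Icc 0 T := Icc_subset_Icc hTδ0 (le_refl _)
  have hIccsub3 : Icc (0:ℝ) δ ⊆ Icc 0 T := Icc_subset_Icc (le_refl _) hδT
  have hIccsub4 : Icc δ T ⊆ Icc 0 T := Icc_subset_Icc hδ.le (le_refl _)
  have hmem : ∀ x ∈ Icc (0:ℝ) (T - δ), x + δ ∈ Icc (0:ℝ) T := by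
    intro x hx; exact ⟨by linarith [hx.1], by linarith [hx.2]⟩
  have hhc : ContinuousOn (fun x => φ x * ψ x) (Icc 0 T) := hφc.mul hψc
  have hint : IntervalIntegrable (fun x => φ x * ψ x) volume 0 T := by
    apply ContinuousOn.intervalIntegrable; rwa [Set.uIcc_of_le hT]
  have hii : ∀ (a b : ℝ), 0 ≤ a → a ≤ b → b ≤ T → ∀ f : ℝ → ℝ, ContinuousOn f (Icc 0 T) →
      IntervalIntegrable f volume a b := by
    intro a b ha hab hbT f hf
    apply ContinuousOn.intervalIntegrable
    apply hf.mono
    rw [Set.uIcc_of_le hab]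
    exact Icc_subset_Icc ha hbT
  have hshiftc : ContinuousOn (fun x => φ (x + δ) * ψ (x + δ)) (Icc 0 (T - δ)) := by
    apply (hhc.comp (continuous_add_right δ).continuousOn)
    intro x hx; exact hmem x hx
  have hφshiftc : ContinuousOn (fun x => φ (x + δ)) (Icc 0 (T - δ)) :=
    (hφc.comp (continuous_add_right δ).continuousOn) hmem
  have hψshiftc : ContinuousOn (fun x => ψ (x + δ)) (Icc 0 (T - δ)) :=
    (hψc.comp (continuous_add_right δ).continuousOn) hmem
  -- piece bounds
  have hb2 : (∫ x in (T - δ)..T, |φ x * ψ x|) ≤ M * δ := by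
    have : (∫ x in (T - δ)..T, |φ x * ψ x|) ≤ ∫ x in (T - δ)..T, M := by
      apply integral_mono_on (by linarith) (hii _ _ hTδ0 (by linarith) (le_refl _) _
        (hhc.abs)) (intervalIntegrable_const)
      intro x hx
      have h1 := hφb x (hIccsub2 hx); have h2 := hψb x (hIccsub2 hx)
      rw [abs_of_nonneg (mul_nonneg h1.1 h2.1)]
      calc φ x * ψ x ≤ M * 1 := mul_le_mul h1.2 h2.2 h2.1 hM
        _ = M := mul_one M
    calc (∫ x in (T - δ)..T, |φ x * ψ x|) ≤ ∫ x in (T - δ)..T, M := this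
      _ = M * δ := by rw [intervalIntegral.integral_const]; simp; ring
  have hb3 : (∫ x in (0:ℝ)..δ, |φ x * ψ x|) ≤ M * δ := by
    have : (∫ x in (0:ℝ)..δ, |φ x * ψ x|) ≤ ∫ x in (0:ℝ)..δ, M := by
      apply integral_mono_on hδ.le (hii _ _ (le_refl _) hδ.le hδT _ (hhc.abs))
        (intervalIntegrable_const)
      intro x hx
      have h1 := hφb x (hIccsub3 hx); have h2 := hψb x (hIccsub3 hx)
      rw [abs_of_nonneg (mul_nonneg h1.1 h2.1)]
      calc φ x * ψ x ≤ M * 1 := mul_le_mul h1.2 h2.2 h2.1 hM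
        _ = M := mul_one M
    calc (∫ x in (0:ℝ)..δ, |φ x * ψ x|) ≤ ∫ x in (0:ℝ)..δ, M := this
      _ = M * δ := by rw [intervalIntegral.integral_const]; simp [mul_comm]
  have hb1 : (∫ x in (0:ℝ)..(T - δ), |φ x * ψ x - φ (x + δ) * ψ (x + δ)|) ≤ 2 * (M * δ) := by
    have hptwise : ∀ x ∈ Icc (0:ℝ) (T - δ),
        |φ x * ψ x - φ (x + δ) * ψ (x + δ)|
          ≤ M * (ψ x - ψ (x + δ)) + (φ (x + δ) - φ x) := by
      intro x hx
      have hx1 : x ∈ Icc (0:ℝ) T := hIccsub1 hx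
      have hx2 : x + δ ∈ Icc (0:ℝ) T := hmem x hx
      have hφ1 := hφb x hx1; have hφ2 := hφb _ hx2
      have hψ1 := hψb x hx1; have hψ2 := hψb _ hx2
      have hφle : φ x ≤ φ (x + δ) := hφm hx1 hx2 (by linarith)
      have hψle : ψ (x + δ) ≤ ψ x := hψm hx1 hx2 (by linarith)
      have decomp : φ x * ψ x - φ (x + δ) * ψ (x + δ)
          = φ (x + δ) * (ψ x - ψ (x + δ)) - (φ (x + δ) - φ x) * ψ x := by ring
      rw [decomp]
      have t1 : |φ (x + δ) * (ψ x - ψ (x + δ))| ≤ M * (ψ x - ψ (x + δ)) := by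
        rw [abs_mul, abs_of_nonneg hφ2.1, abs_of_nonneg (by linarith)]
        exact mul_le_mul_of_nonneg_right hφ2.2 (by linarith)
      have t2 : |(φ (x + δ) - φ x) * ψ x| ≤ (φ (x + δ) - φ x) := by
        rw [abs_mul, abs_of_nonneg (by linarith), abs_of_nonneg hψ1.1]
        calc (φ (x + δ) - φ x) * ψ x ≤ (φ (x + δ) - φ x) * 1 :=
              mul_le_mul_of_nonneg_left hψ1.2 (by linarith)
          _ = φ (x + δ) - φ x := mul_one _
      calc |φ (x + δ) * (ψ x - ψ (x + δ)) - (φ (x + δ) - φ x) * ψ x|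
          ≤ |φ (x + δ) * (ψ x - ψ (x + δ))| + |(φ (x + δ) - φ x) * ψ x| := abs_sub _ _
        _ ≤ M * (ψ x - ψ (x + δ)) + (φ (x + δ) - φ x) := by linarith
    have step1 : (∫ x in (0:ℝ)..(T - δ), |φ x * ψ x - φ (x + δ) * ψ (x + δ)|)
        ≤ ∫ x in (0:ℝ)..(T - δ), (M * (ψ x - ψ (x + δ)) + (φ (x + δ) - φ x)) := by
      apply integral_mono_on hTδ0
      · apply ContinuousOn.intervalIntegrable
        rw [Set.uIcc_of_le hTδ0]
        exact ((hhc.mono hIccsub1).sub hshiftc).abs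
      · apply ContinuousOn.intervalIntegrable
        rw [Set.uIcc_of_le hTδ0]
        exact (((hψc.mono hIccsub1).sub hψshiftc).const_smul M).add
          (hφshiftc.sub (hφc.mono hIccsub1))
      · exact hptwise
    -- compute the RHS
    have iψ : IntervalIntegrable ψ volume 0 T := by
      apply ContinuousOn.intervalIntegrable; rwa [Set.uIcc_of_le hT]
    have iφ : IntervalIntegrable φ volume 0 T := by
      apply ContinuousOn.intervalIntegrable; rwa [Set.uIcc_of_le hT]
    have iψ1 : IntervalIntegrable ψ volume 0 (T - δ) := hii _ _ (le_refl _) hTδ0 (by linarith) _ hψc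
    have iφ1 : IntervalIntegrable φ volume 0 (T - δ) := hii _ _ (le_refl _) hTδ0 (by linarith) _ hφc
    have iψs : IntervalIntegrable (fun x => ψ (x + δ)) volume 0 (T - δ) := by
      apply ContinuousOn.intervalIntegrable; rw [Set.uIcc_of_le hTδ0]; exact hψshiftc
    have iφs : IntervalIntegrable (fun x => φ (x + δ)) volume 0 (T - δ) := by
      apply ContinuousOn.intervalIntegrable; rw [Set.uIcc_of_le hTδ0]; exact hφshiftc
    have eψ : (∫ x in (0:ℝ)..(T - δ), ψ (x + δ)) = ∫ x in δ..T, ψ x := by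
      have := integral_comp_add_right (a := (0:ℝ)) (b := T - δ) ψ δ
      simpa using this
    have eφ : (∫ x in (0:ℝ)..(T - δ), φ (x + δ)) = ∫ x in δ..T, φ x := by
      have := integral_comp_add_right (a := (0:ℝ)) (b := T - δ) φ δ
      simpa using this
    have aψ1 : (∫ x in (0:ℝ)..δ, ψ x) + (∫ x in δ..T, ψ x) = ∫ x in (0:ℝ)..T, ψ x :=
      integral_add_adjacent_intervals (hii _ _ (le_refl _) hδ.le hδT _ hψc)
        (hii _ _ hδ.le hδT (le_refl _) _ hψc)
    have aψ2 : (∫ x in (0:ℝ)..(T - δ), ψ x) + (∫ x in (T - δ)..T, ψ x) = ∫ x in (0:ℝ)..T, ψ x :=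
      integral_add_adjacent_intervals iψ1 (hii _ _ hTδ0 (by linarith) (le_refl _) _ hψc)
    have aφ1 : (∫ x in (0:ℝ)..δ, φ x) + (∫ x in δ..T, φ x) = ∫ x in (0:ℝ)..T, φ x :=
      integral_add_adjacent_intervals (hii _ _ (le_refl _) hδ.le hδT _ hφc)
        (hii _ _ hδ.le hδT (le_refl _) _ hφc)
    have aφ2 : (∫ x in (0:ℝ)..(T - δ), φ x) + (∫ x in (T - δ)..T, φ x) = ∫ x in (0:ℝ)..T, φ x :=
      integral_add_adjacent_intervals iφ1 (hii _ _ hTδ0 (by linarith) (le_refl _) _ hφc)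
    have hψδ : (∫ x in (0:ℝ)..δ, ψ x) ≤ δ := by
      calc (∫ x in (0:ℝ)..δ, ψ x) ≤ ∫ x in (0:ℝ)..δ, 1 := by
            apply integral_mono_on hδ.le (hii _ _ (le_refl _) hδ.le hδT _ hψc)
              intervalIntegrable_const
            intro x hx; exact (hψb x (hIccsub3 hx)).2
        _ = δ := by simp
    have hψTδ : 0 ≤ ∫ x in (T - δ)..T, ψ x := by
      apply integral_nonneg (by linarith)
      intro x hx; exact (hψb x (hIccsub2 hx)).1
    have hφTδ : (∫ x in (T - δ)..T, φ x) ≤ M * δ := by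
      calc (∫ x in (T - δ)..T, φ x) ≤ ∫ x in (T - δ)..T, M := by
            apply integral_mono_on (by linarith) (hii _ _ hTδ0 (by linarith) (le_refl _) _ hφc)
              intervalIntegrable_const
            intro x hx; exact (hφb x (hIccsub2 hx)).2
        _ = M * δ := by rw [intervalIntegral.integral_const]; simp; ring
    have hφ0δ : 0 ≤ ∫ x in (0:ℝ)..δ, φ x := by
      apply integral_nonneg hδ.le
      intro x hx; exact (hφb x (hIccsub3 hx)).1
    have rhs_eq : (∫ x in (0:ℝ)..(T - δ), (M * (ψ x - ψ (x + δ)) + (φ (x + δ) - φ x)))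
        = M * ((∫ x in (0:ℝ)..(T - δ), ψ x) - (∫ x in δ..T, ψ x))
          + ((∫ x in δ..T, φ x) - ∫ x in (0:ℝ)..(T - δ), φ x) := by
      rw [integral_add ((iψ1.sub iψs).const_mul M) (iφs.sub iφ1),
        intervalIntegral.integral_const_mul, integral_sub iψ1 iψs, integral_sub iφs iφ1, eψ, eφ]
    rw [rhs_eq] at step1
    have : M * ((∫ x in (0:ℝ)..(T - δ), ψ x) - (∫ x in δ..T, ψ x))
          + ((∫ x in δ..T, φ x) - ∫ x in (0:ℝ)..(T - δ), φ x) ≤ 2 * (M * δ) := by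
      have k1 : (∫ x in (0:ℝ)..(T - δ), ψ x) - (∫ x in δ..T, ψ x)
          = (∫ x in (0:ℝ)..δ, ψ x) - ∫ x in (T - δ)..T, ψ x := by linarith
      have k2 : (∫ x in δ..T, φ x) - (∫ x in (0:ℝ)..(T - δ), φ x)
          = (∫ x in (T - δ)..T, φ x) - ∫ x in (0:ℝ)..δ, φ x := by linarith
      rw [k1, k2]
      have : M * ((∫ x in (0:ℝ)..δ, ψ x) - ∫ x in (T - δ)..T, ψ x) ≤ M * δ := by
        apply mul_le_mul_of_nonneg_left _ hM
        linarith
      linarith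
    linarith
  have core := shift_core (fun x => φ x * ψ x) K hδ hδT hint hK hK1 hKs
  linarith [core, hb1, hb2, hb3, abs_nonneg (∫ x in (0:ℝ)..T, (φ x * ψ x) * K x)]


private lemma kernel_bound (fφ hφ : ℝ → ℝ) (T a b : ℝ) (hT : 0 < T)
    (hfc : ContinuousOn fφ (Icc 0 T))
    (hderiv : ∀ x ∈ Ioo 0 T, HasDerivAt fφ (-(hφ x)) x)
    (hint : IntervalIntegrable hφ volume 0 T)
    (ha : a ≠ 0) (hsb : Real.sin b = 0) (hfT : fφ T * Real.sin (a * T + b) = 0) :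
    ∫ x in (0:ℝ)..T, fφ x * Real.cos (a * x + b)
      = (1 / a) * ∫ x in (0:ℝ)..T, hφ x * Real.sin (a * x + b) := by
  have hsin : ∀ x : ℝ, HasDerivAt (fun y => Real.sin (a * y + b)) (a * Real.cos (a * x + b)) x := by
    intro x
    have hinner : HasDerivAt (fun y : ℝ => a * y + b) a x := by
      simpa using ((hasDerivAt_id x).const_mul a).add_const b
    have houter := Real.hasDerivAt_sin (a * x + b)
    have := HasDerivAt.comp x houter hinner
    simpa [mul_comm, Function.comp_def] using this
  have hcsin : Continuous (fun y => Real.sin (a * y + b)) :=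
    Real.continuous_sin.comp (by continuity)
  have hccos : Continuous (fun y => Real.cos (a * y + b)) :=
    Real.continuous_cos.comp (by continuity)
  set F : ℝ → ℝ := fun x => fφ x * (Real.sin (a * x + b) / a) with hF
  have hder : ∀ x ∈ Ioo (0:ℝ) T, HasDerivAt F
      (fφ x * Real.cos (a * x + b) - hφ x * (Real.sin (a * x + b) / a)) x := by
    intro x hx
    have h1 := (hderiv x hx).mul ((hsin x).div_const a)
    have : -hφ x * (Real.sin (a * x + b) / a) + fφ x * (a * Real.cos (a * x + b) / a)
        = fφ x * Real.cos (a * x + b) - hφ x * (Real.sin (a * x + b) / a) := by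
      field_simp
      ring
    rw [this] at h1
    exact h1
  have hFc : ContinuousOn F (Icc 0 T) := hfc.mul (hcsin.div_const a).continuousOn
  have hint2 : IntervalIntegrable (fun x => hφ x * (Real.sin (a * x + b) / a)) volume 0 T :=
    hint.mul_continuousOn (hcsin.div_const a).continuousOn
  have hint1 : IntervalIntegrable (fun x => fφ x * Real.cos (a * x + b)) volume 0 T := by
    apply ContinuousOn.intervalIntegrable
    rw [Set.uIcc_of_le hT.le]
    exact hfc.mul hccos.continuousOn
  have ftc := integral_eq_sub_of_hasDerivAt_of_le hT.le hFc hder (hint1.sub hint2)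
  have hF0 : F 0 = 0 := by
    simp only [hF]
    rw [show a * 0 + b = b by ring, hsb]
    simp
  have hFT : F T = 0 := by
    simp only [hF]
    rw [div_eq_mul_inv, ← mul_assoc, hfT, zero_mul]
  rw [integral_sub hint1 hint2, hFT, hF0, sub_zero] at ftc
  have : (∫ x in (0:ℝ)..T, hφ x * (Real.sin (a * x + b) / a))
      = (1 / a) * ∫ x in (0:ℝ)..T, hφ x * Real.sin (a * x + b) := by
    rw [← intervalIntegral.integral_const_mul]
    apply intervalIntegral.integral_congr
    intro x _
    field_simp
  linarith [ftc, this]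


private lemma s_deriv_facts (p : ℝ) (hp : 1 < p) (s : ℝ → ℝ)
    (hinv₁ : ∀ y ∈ Icc (0:ℝ) 1, s (Fp p y) = y)
    (hinv₂ : ∀ x ∈ Icc (0:ℝ) (Fp p 1), Fp p (s x) = x) :
    (0 < Fp p 1) ∧ ContinuousOn s (Icc 0 (Fp p 1)) ∧ (s 0 = 0) ∧ (s (Fp p 1) = 1)
      ∧ StrictMonoOn s (Icc 0 (Fp p 1)) ∧ (∀ x ∈ Icc (0:ℝ) (Fp p 1), s x ∈ Icc (0:ℝ) 1)
      ∧ (∀ x ∈ Ioo (0:ℝ) (Fp p 1), HasDerivAt s ((1 - s x ^ p) ^ (1/p)) x) := by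
  have hp0 : (0:ℝ) < p := lt_trans one_pos hp
  have hpne : p ≠ 0 := ne_of_gt hp0
  set g : ℝ → ℝ := fun t => (1 - t ^ p) ^ (-(1/p)) with hg_def
  have hsub : ∀ t ∈ Ico (0:ℝ) 1, 0 < 1 - t ^ p := by
    intro t ht
    have : t ^ p < 1 := Real.rpow_lt_one ht.1 ht.2 hp0
    linarith
  have hgpos : ∀ t ∈ Ico (0:ℝ) 1, 0 < g t := by
    intro t ht
    exact Real.rpow_pos_of_pos (hsub t ht) _
  have hgcont : ∀ t ∈ Ico (0:ℝ) 1, ContinuousAt g t := by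
    intro t ht
    have h1 : ContinuousAt (fun u : ℝ => u ^ p) t :=
      Real.continuousAt_rpow_const t p (Or.inr hp0.le)
    have h2 : ContinuousAt (fun u : ℝ => 1 - u ^ p) t := continuousAt_const.sub h1
    exact h2.rpow_const (Or.inl (ne_of_gt (hsub t ht)))
  have hmaj : IntervalIntegrable (fun t : ℝ => (1 - t) ^ (-(1/p))) volume 0 1 := by
    have h1 : IntervalIntegrable (fun t : ℝ => t ^ (-(1/p))) volume 0 1 := by
      apply intervalIntegrable_rpow'
      have : 1/p < 1 := by rw [div_lt_one hp0]; exact hp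
      linarith
    have := (h1.comp_sub_left 1).symm
    simpa using this
  have hgmeas : AEStronglyMeasurable g (volume.restrict (Ioo (0:ℝ) 1)) := by
    have : ContinuousOn g (Ioo 0 1) := fun t ht =>
      (hgcont t ⟨ht.1.le, ht.2⟩).continuousWithinAt
    exact this.aestronglyMeasurable measurableSet_Ioo
  have gint : IntervalIntegrable g volume 0 1 := by
    rw [intervalIntegrable_iff_integrableOn_Ioc_of_le zero_le_one,
      integrableOn_Ioc_iff_integrableOn_Ioo]
    have hmaj' : IntegrableOn (fun t : ℝ => (1 - t) ^ (-(1/p))) (Ioo 0 1) volume := by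
      have := hmaj.1
      rw [integrableOn_Ioc_iff_integrableOn_Ioo] at this
      exact this
    apply Integrable.mono hmaj' hgmeas
    rw [ae_restrict_iff' measurableSet_Ioo]
    apply ae_of_all
    intro t ht
    obtain ⟨ht1, ht2⟩ := ht
    have h1 : 0 < 1 - t ^ p := hsub t ⟨ht1.le, ht2⟩
    have h2 : t ^ p ≤ t := by
      calc t ^ p ≤ t ^ (1:ℝ) := Real.rpow_le_rpow_of_exponent_ge ht1 ht2.le hp.le
        _ = t := Real.rpow_one t
    have hips : (0:ℝ) < 1/p := by positivity
    have h3 : g t ≤ (1 - t) ^ (-(1/p)) :=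
      Real.rpow_le_rpow_of_nonpos (by linarith) (by linarith) (by linarith)
    rw [Real.norm_eq_abs, Real.norm_eq_abs, abs_of_pos (hgpos t ⟨ht1.le, ht2⟩),
      abs_of_pos (Real.rpow_pos_of_pos (by linarith) _)]
    exact h3
  have hII : ∀ u v : ℝ, 0 ≤ u → u ≤ v → v ≤ 1 → IntervalIntegrable g volume u v := by
    intro u v hu huv hv
    apply gint.mono_set
    rw [Set.uIcc_of_le huv, Set.uIcc_of_le zero_le_one]
    exact Icc_subset_Icc hu hv
  have hFpg : ∀ y, Fp p y = ∫ t in (0:ℝ)..y, g t := fun _ => rfl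
  have hFmono : StrictMonoOn (Fp p) (Icc 0 1) := by
    intro x hx y hy hxy
    have hdiff : Fp p y - Fp p x = ∫ t in x..y, g t := by
      rw [hFpg, hFpg]
      exact integral_interval_sub_left (hII 0 y le_rfl hy.1 hy.2) (hII 0 x le_rfl hx.1 hx.2)
    have hpos : 0 < ∫ t in x..y, g t := by
      apply intervalIntegral.intervalIntegral_pos_of_pos_on (hII x y hx.1 hxy.le hy.2)
      · intro t ht
        exact hgpos t ⟨by linarith [ht.1, hx.1], by linarith [ht.2, hy.2]⟩
      · exact hxy
    linarith
  have hF0 : Fp p 0 = 0 := intervalIntegral.integral_same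
  have hc : 0 < Fp p 1 := by
    have := hFmono ⟨le_rfl, zero_le_one⟩ ⟨zero_le_one, le_rfl⟩ zero_lt_one
    rwa [hF0] at this
  have hFcont : ContinuousOn (Fp p) (Icc 0 1) := by
    have hInt : IntegrableOn g (uIcc 0 1) volume := by
      rw [Set.uIcc_of_le zero_le_one, integrableOn_Icc_iff_integrableOn_Ioc]
      exact gint.1
    have := intervalIntegral.continuousOn_primitive_interval hInt
    rw [Set.uIcc_of_le zero_le_one] at this
    exact this
  have hsurj : ∀ z ∈ Icc (0:ℝ) (Fp p 1), ∃ y ∈ Icc (0:ℝ) 1, Fp p y = z := by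
    intro z hz
    have h := intermediate_value_Icc zero_le_one hFcont
    rw [hF0] at h
    exact h hz
  have smem : ∀ x ∈ Icc (0:ℝ) (Fp p 1), s x ∈ Icc (0:ℝ) 1 := by
    intro x hx
    obtain ⟨y, hy, hyx⟩ := hsurj x hx
    rw [← hyx, hinv₁ y hy]; exact hy
  have s0 : s 0 = 0 := by
    have := hinv₁ 0 ⟨le_rfl, zero_le_one⟩
    rwa [hF0] at this
  have sc : s (Fp p 1) = 1 := hinv₁ 1 ⟨zero_le_one, le_rfl⟩
  have smono : StrictMonoOn s (Icc 0 (Fp p 1)) := by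
    intro x hx y hy hxy
    by_contra hle
    push_neg at hle
    have h1 : Fp p (s y) ≤ Fp p (s x) := by
      rcases eq_or_lt_of_le hle with he | hlt
      · rw [he]
      · exact (hFmono (smem y hy) (smem x hx) hlt).le
    rw [hinv₂ x hx, hinv₂ y hy] at h1
    linarith
  have hFmem : ∀ y ∈ Icc (0:ℝ) 1, Fp p y ∈ Icc (0:ℝ) (Fp p 1) := by
    intro y hy
    constructor
    · rw [← hF0]
      exact hFmono.monotoneOn ⟨le_rfl, zero_le_one⟩ hy hy.1
    · exact hFmono.monotoneOn hy ⟨zero_le_one, le_rfl⟩ hy.2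
  have scont : ContinuousOn s (Icc 0 (Fp p 1)) := by
    intro x0 hx0
    have hrt : x0 < Fp p 1 → ContinuousWithinAt s (Ici x0) x0 := by
      intro hlt
      apply StrictMonoOn.continuousWithinAt_right_of_exists_between smono
      · apply mem_nhdsWithin.mpr
        refine ⟨Iio (Fp p 1), isOpen_Iio, hlt, ?_⟩
        intro z hz
        exact ⟨le_trans hx0.1 hz.2, hz.1.le⟩
      · intro b hb
        have hsx0 : (0:ℝ) ≤ s x0 := (smem x0 hx0).1
        have hsx1 : s x0 < 1 := by
          have := smono hx0 ⟨hc.le, le_rfl⟩ hlt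
          rwa [sc] at this
        refine ⟨Fp p (min b 1), hFmem _ ⟨le_min (by linarith) zero_le_one, min_le_right _ _⟩, ?_⟩
        rw [hinv₁ _ ⟨le_min (by linarith) zero_le_one, min_le_right _ _⟩]
        exact ⟨lt_min hb hsx1, min_le_left _ _⟩
    have hlf : 0 < x0 → ContinuousWithinAt s (Iic x0) x0 := by
      intro hpos
      apply StrictMonoOn.continuousWithinAt_left_of_exists_between smono
      · apply mem_nhdsWithin.mpr
        refine ⟨Ioi (0:ℝ), isOpen_Ioi, hpos, ?_⟩
        intro z hz
        exact ⟨hz.1.le, le_trans hz.2 hx0.2⟩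
      · intro b hb
        have hsx1 : s x0 ≤ 1 := (smem x0 hx0).2
        have hsx0 : 0 < s x0 := by
          have := smono ⟨le_rfl, hc.le⟩ hx0 hpos
          rwa [s0] at this
        refine ⟨Fp p (max b 0), hFmem _ ⟨le_max_right _ _, max_le (by linarith) zero_le_one⟩, ?_⟩
        rw [hinv₁ _ ⟨le_max_right _ _, max_le (by linarith) zero_le_one⟩]
        exact ⟨le_max_left _ _, max_lt hb hsx0⟩
    have hsubsets : Icc (0:ℝ) (Fp p 1) ⊆ Iic x0 ∪ Ici x0 := by
      intro z _
      rcases le_total z x0 with h | h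
      · exact Or.inl h
      · exact Or.inr h
    by_cases hxc : x0 < Fp p 1
    · by_cases hx0pos : 0 < x0
      · exact (ContinuousWithinAt.union (hlf hx0pos) (hrt hxc)).mono hsubsets
      · have hx00 : x0 = 0 := le_antisymm (not_lt.mp hx0pos) hx0.1
        apply (hrt hxc).mono
        intro z hz
        rw [hx00]
        exact hz.1
    · have hx0c : x0 = Fp p 1 := le_antisymm hx0.2 (not_lt.mp hxc)
      apply (hlf (by rw [hx0c]; exact hc)).mono
      intro z hz
      rw [hx0c]
      exact hz.2
  have sderiv : ∀ x ∈ Ioo (0:ℝ) (Fp p 1), HasDerivAt s ((1 - s x ^ p) ^ (1/p)) x := by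
    intro x hx
    have hsx : s x ∈ Ioo (0:ℝ) 1 := by
      constructor
      · have := smono ⟨le_rfl, hc.le⟩ ⟨hx.1.le, hx.2.le⟩ hx.1
        rwa [s0] at this
      · have := smono ⟨hx.1.le, hx.2.le⟩ ⟨hc.le, le_rfl⟩ hx.2
        rwa [sc] at this
    have hgsx : 0 < 1 - s x ^ p := hsub (s x) ⟨hsx.1.le, hsx.2⟩
    have hmeas : StronglyMeasurableAtFilter g (nhds (s x)) volume :=
      ⟨Ioo 0 1, Ioo_mem_nhds hsx.1 hsx.2, hgmeas⟩
    have hFd : HasDerivAt (Fp p) (g (s x)) (s x) :=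
      intervalIntegral.integral_hasDerivAt_right (hII 0 (s x) le_rfl hsx.1.le hsx.2.le)
        hmeas (hgcont (s x) ⟨hsx.1.le, hsx.2⟩)
    have hsc : ContinuousAt s x :=
      scont.continuousAt (Icc_mem_nhds hx.1 hx.2)
    have hfg : ∀ᶠ z in nhds x, Fp p (s z) = z := by
      filter_upwards [Icc_mem_nhds hx.1 hx.2] with z hz
      exact hinv₂ z hz
    have hne : g (s x) ≠ 0 := ne_of_gt (hgpos (s x) ⟨hsx.1.le, hsx.2⟩)
    have hd := HasDerivAt.of_local_left_inverse hsc hFd hne hfg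
    have heq : (g (s x))⁻¹ = (1 - s x ^ p) ^ (1/p) := by
      show ((1 - s x ^ p) ^ (-(1/p)))⁻¹ = (1 - s x ^ p) ^ (1/p)
      rw [Real.rpow_neg hgsx.le, inv_inv]
    rwa [heq] at hd
  exact ⟨hc, scont, s0, sc, smono, smem, sderiv⟩


private lemma holder_bound {p L T : ℝ} (σ : ℝ → ℝ) (hp : 1 < p) (hL : 0 < L) (hT : 0 < T)
    (hσc : ContinuousOn σ (Icc 0 T)) (hσT : σ T = 1)
    (hσmem : ∀ x ∈ Icc (0:ℝ) T, σ x ∈ Icc (0:ℝ) 1)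
    (hσlt : ∀ x ∈ Ico (0:ℝ) T, σ x < 1)
    (hσd : ∀ x ∈ Ioo (0:ℝ) T, HasDerivAt σ (L * ((1 - σ x ^ p) ^ (1/p))) x) :
    ∀ x ∈ Icc (0:ℝ) T, (1 - σ x ^ p) ^ (1/p)
      ≤ (p ^ (1/p) * ((p-1)/p * L * p ^ (1/p)) ^ (1/(p-1))) * (T - x) ^ (1/(p-1)) := by
  have hp0 : (0:ℝ) < p := lt_trans one_pos hp
  set β : ℝ := (p-1)/p with hβ_def
  set K₀ : ℝ := β * L * p ^ (1/p) with hK₀_def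
  have hβ : 0 < β := div_pos (by linarith) hp0
  have hβ1 : β ≠ 0 := ne_of_gt hβ
  have hK₀ : 0 < K₀ := by
    have : (0:ℝ) < p ^ (1/p) := Real.rpow_pos_of_pos hp0 _
    positivity
  set W : ℝ → ℝ := fun x => 1 - σ x with hW_def
  have hW0 : ∀ x ∈ Icc (0:ℝ) T, 0 ≤ W x := by
    intro x hx
    have := (hσmem x hx).2
    simp only [hW_def]; linarith
  have bern : ∀ u ∈ Icc (0:ℝ) 1, 1 - u ^ p ≤ p * (1 - u) := by
    intro u hu
    have h := one_add_mul_self_le_rpow_one_add (s := u - 1) (by linarith [hu.1]) hp.le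
    have he : (1 + (u - 1) : ℝ) = u := by ring
    rw [he] at h
    nlinarith
  have hfnn : ∀ x ∈ Icc (0:ℝ) T, 0 ≤ 1 - σ x ^ p := by
    intro x hx
    have : σ x ^ p ≤ 1 := Real.rpow_le_one (hσmem x hx).1 (hσmem x hx).2 hp0.le
    linarith
  have fφle : ∀ x ∈ Icc (0:ℝ) T, (1 - σ x ^ p) ^ (1/p) ≤ p ^ (1/p) * (W x) ^ (1/p) := by
    intro x hx
    have h1 : 1 - σ x ^ p ≤ p * W x := bern (σ x) (hσmem x hx)
    calc (1 - σ x ^ p) ^ (1/p) ≤ (p * W x) ^ (1/p) :=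
          Real.rpow_le_rpow (hfnn x hx) h1 (by positivity)
      _ = p ^ (1/p) * (W x) ^ (1/p) := Real.mul_rpow hp0.le (hW0 x hx)
  set Φ : ℝ → ℝ := fun x => (W x) ^ β + K₀ * x with hΦ_def
  have Φcont : ContinuousOn Φ (Icc 0 T) := by
    apply ContinuousOn.add
    · apply ContinuousOn.rpow_const (continuousOn_const.sub hσc)
      intro x hx
      exact Or.inr hβ.le
    · exact (continuous_const.mul continuous_id).continuousOn
  have Φderiv : ∀ x ∈ Ioo (0:ℝ) T, HasDerivAt Φ
      (β * (W x) ^ (β - 1) * (-(L * (1 - σ x ^ p) ^ (1/p))) + K₀) x := by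
    intro x hx
    have hWd : HasDerivAt W (-(L * (1 - σ x ^ p) ^ (1/p))) x := (hσd x hx).const_sub 1
    have hWpos : 0 < W x := by
      have := hσlt x ⟨hx.1.le, hx.2⟩
      simp only [hW_def]; linarith
    have router := Real.hasDerivAt_rpow_const (x := W x) (p := β) (Or.inl (ne_of_gt hWpos))
    have h1 := router.comp x hWd
    have h2 : HasDerivAt (fun y : ℝ => K₀ * y) K₀ x := by
      simpa using (hasDerivAt_id x).const_mul K₀
    exact h1.add h2
  have Φmono : MonotoneOn Φ (Icc 0 T) := by
    apply monotoneOn_of_deriv_nonneg (convex_Icc 0 T) Φcont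
    · intro x hx
      rw [interior_Icc] at hx
      exact ((Φderiv x hx).differentiableAt).differentiableWithinAt
    · intro x hx
      rw [interior_Icc] at hx
      rw [(Φderiv x hx).deriv]
      have hWpos : 0 < W x := by
        have := hσlt x ⟨hx.1.le, hx.2⟩
        simp only [hW_def]; linarith
      have hxI : x ∈ Icc (0:ℝ) T := ⟨hx.1.le, hx.2.le⟩
      have key : β * (W x) ^ (β - 1) * (L * (1 - σ x ^ p) ^ (1/p)) ≤ K₀ := by
        have h1 : (1 - σ x ^ p) ^ (1/p) ≤ p ^ (1/p) * (W x) ^ (1/p) := fφle x hxI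
        have hWb : (0:ℝ) ≤ (W x) ^ (β - 1) := Real.rpow_nonneg hWpos.le _
        have step : β * (W x) ^ (β - 1) * (L * (1 - σ x ^ p) ^ (1/p))
            ≤ β * (W x) ^ (β - 1) * (L * (p ^ (1/p) * (W x) ^ (1/p))) := by
          apply mul_le_mul_of_nonneg_left _ (by positivity)
          exact mul_le_mul_of_nonneg_left h1 hL.le
        have weq : (W x) ^ (β - 1) * (W x) ^ (1/p) = 1 := by
          rw [← Real.rpow_add hWpos]
          have : β - 1 + 1/p = 0 := by
            rw [hβ_def]; field_simp; ring
          rw [this, Real.rpow_zero]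
        calc β * (W x) ^ (β - 1) * (L * (1 - σ x ^ p) ^ (1/p))
            ≤ β * (W x) ^ (β - 1) * (L * (p ^ (1/p) * (W x) ^ (1/p))) := step
          _ = K₀ * ((W x) ^ (β - 1) * (W x) ^ (1/p)) := by rw [hK₀_def]; ring
          _ = K₀ := by rw [weq, mul_one]
      linarith
  intro x hx
  have hΦle : Φ x ≤ Φ T := Φmono hx ⟨hT.le, le_rfl⟩ hx.2
  have hWT : W T = 0 := by simp [hW_def, hσT]
  have hΦT : Φ T = K₀ * T := by
    simp only [hΦ_def, hWT, Real.zero_rpow hβ1, zero_add]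
  have hWβ : (W x) ^ β ≤ K₀ * (T - x) := by
    have : (W x) ^ β + K₀ * x ≤ K₀ * T := by
      rw [← hΦT]; exact hΦle
    nlinarith
  have hWle : W x ≤ (K₀ * (T - x)) ^ (1/β) := by
    have h1 : ((W x) ^ β) ^ (1/β) ≤ (K₀ * (T - x)) ^ (1/β) :=
      Real.rpow_le_rpow (Real.rpow_nonneg (hW0 x hx) _) hWβ (by positivity)
    rwa [← Real.rpow_mul (hW0 x hx), mul_one_div, div_self hβ1, Real.rpow_one] at h1
  have hTx : (0:ℝ) ≤ T - x := by linarith [hx.2]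
  calc (1 - σ x ^ p) ^ (1/p) ≤ p ^ (1/p) * (W x) ^ (1/p) := fφle x hx
    _ ≤ p ^ (1/p) * ((K₀ * (T - x)) ^ (1/β)) ^ (1/p) := by
        apply mul_le_mul_of_nonneg_left _ (Real.rpow_nonneg hp0.le _)
        exact Real.rpow_le_rpow (hW0 x hx) hWle (by positivity)
    _ = p ^ (1/p) * (K₀ * (T - x)) ^ (1/(p-1)) := by
        rw [← Real.rpow_mul (by positivity : (0:ℝ) ≤ K₀ * (T - x))]
        have hpne : p ≠ 0 := ne_of_gt hp0
        have hp1ne : p - 1 ≠ 0 := ne_of_gt (by linarith)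
        have he : (1/β) * (1/p) = 1/(p-1) := by
          rw [hβ_def]
          field_simp
        rw [he]
    _ = (p ^ (1/p) * K₀ ^ (1/(p-1))) * (T - x) ^ (1/(p-1)) := by
        rw [Real.mul_rpow hK₀.le hTx]; ring
    _ = (p ^ (1/p) * ((p-1)/p * L * p ^ (1/p)) ^ (1/(p-1))) * (T - x) ^ (1/(p-1)) := by
        rw [hK₀_def, hβ_def]

end Helpers

section Main
open MeasureTheory intervalIntegral


set_option maxHeartbeats 1600000 in
theorem fourier_coeff_summable (p : ℝ) (hp : 1 < p) (s : ℝ → ℝ)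
    (hinv₁ : ∀ y ∈ Icc (0:ℝ) 1, s (Fp p y) = y)
    (hinv₂ : ∀ x ∈ Icc (0:ℝ) (pip p / 2), Fp p (s x) = x)
    (hodd : ∀ x, s (-x) = -s x)
    (hsym : ∀ x, s (pip p / 2 - x) = s (pip p / 2 + x)) :
    Summable (fun j : ℕ =>
      |2 * ∫ x in (0:ℝ)..1, deriv s (pip p * x) * Real.cos (j * π * x)|) := by
  have hp0 : (0:ℝ) < p := lt_trans one_pos hp
  have hpne : p ≠ 0 := ne_of_gt hp0
  have hc2 : pip p / 2 = Fp p 1 := by unfold pip; ring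
  rw [hc2] at hinv₂ hsym
  obtain ⟨hc, scont, s0, sc, smono, smem, sderiv⟩ := s_deriv_facts p hp s hinv₁ hinv₂
  set c : ℝ := Fp p 1 with hcdef
  have hL2 : pip p = 2 * c := by unfold pip; rw [hcdef]
  rw [hL2]
  set L : ℝ := 2 * c with hLdef
  have hLpos : 0 < L := by rw [hLdef]; linarith
  have srefl : ∀ v, s (2 * c - v) = s v := by
    intro v
    have h := hsym (c - v)
    have e1 : c - (c - v) = v := by ring
    have e2 : c + (c - v) = 2 * c - v := by ring
    rw [e1, e2] at h
    exact h.symm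
  set σ : ℝ → ℝ := fun x => s (L * x) with hσdef
  set fφ : ℝ → ℝ := fun x => (1 - σ x ^ p) ^ (1/p) with hfφdef
  set hφ : ℝ → ℝ := fun x => L * (σ x ^ (p-1) * (1 - σ x ^ p) ^ ((2-p)/p)) with hhφdef
  have hLT : L * (1/2 : ℝ) = c := by rw [hLdef]; ring
  have hmapsIcc : ∀ x ∈ Icc (0:ℝ) (1/2), L * x ∈ Icc (0:ℝ) c := by
    intro x hx
    constructor
    · exact mul_nonneg hLpos.le hx.1
    · rw [← hLT]; exact mul_le_mul_of_nonneg_left hx.2 hLpos.le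
  have hmapsIoo : ∀ x ∈ Ioo (0:ℝ) (1/2), L * x ∈ Ioo (0:ℝ) c := by
    intro x hx
    constructor
    · exact mul_pos hLpos hx.1
    · rw [← hLT]; exact mul_lt_mul_of_pos_left hx.2 hLpos
  have σcont : ContinuousOn σ (Icc 0 (1/2)) := by
    apply scont.comp (continuous_const.mul continuous_id).continuousOn
    intro x hx
    exact hmapsIcc x hx
  have σ0 : σ 0 = 0 := by
    show s (L * 0) = 0
    rw [mul_zero, s0]
  have σT : σ (1/2) = 1 := by
    show s (L * (1/2)) = 1
    rw [hLT]
    exact sc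
  have σmem : ∀ x ∈ Icc (0:ℝ) (1/2), σ x ∈ Icc (0:ℝ) 1 := fun x hx => smem _ (hmapsIcc x hx)
  have σmono : MonotoneOn σ (Icc 0 (1/2)) := by
    intro x hx y hy hxy
    exact smono.monotoneOn (hmapsIcc x hx) (hmapsIcc y hy)
      (mul_le_mul_of_nonneg_left hxy hLpos.le)
  have σlt : ∀ x ∈ Ico (0:ℝ) (1/2), σ x < 1 := by
    intro x hx
    have h := smono (hmapsIcc x ⟨hx.1, hx.2.le⟩) ⟨hc.le, le_rfl⟩
      (by rw [← hLT]; exact mul_lt_mul_of_pos_left hx.2 hLpos)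
    rwa [sc] at h
  have σpos : ∀ x ∈ Ioo (0:ℝ) (1/2), 0 < σ x := by
    intro x hx
    have h := smono ⟨le_rfl, hc.le⟩ (hmapsIcc x ⟨hx.1.le, hx.2.le⟩) (mul_pos hLpos hx.1)
    rwa [s0] at h
  have σIoo : ∀ x ∈ Ioo (0:ℝ) (1/2), σ x ∈ Ioo (0:ℝ) 1 :=
    fun x hx => ⟨σpos x hx, σlt x ⟨hx.1.le, hx.2⟩⟩
  have σderiv : ∀ x ∈ Ioo (0:ℝ) (1/2), HasDerivAt σ (L * fφ x) x := by
    intro x hx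
    have h1 := sderiv (L * x) (hmapsIoo x hx)
    have h2 : HasDerivAt (fun y : ℝ => L * y) L x := by
      simpa using (hasDerivAt_id x).const_mul L
    have h3 := HasDerivAt.comp x h1 h2
    have : (1 - s (L * x) ^ p) ^ (1/p) * L = L * fφ x := by
      rw [hfφdef]; simp only [hσdef]; ring
    rw [this] at h3
    exact h3
  have wpos : ∀ x ∈ Ioo (0:ℝ) (1/2), 0 < 1 - σ x ^ p := by
    intro x hx
    have : σ x ^ p < 1 := Real.rpow_lt_one (σpos x hx).le (σlt x ⟨hx.1.le, hx.2⟩) hp0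
    linarith
  have wnn : ∀ x ∈ Icc (0:ℝ) (1/2), 0 ≤ 1 - σ x ^ p := by
    intro x hx
    have : σ x ^ p ≤ 1 := Real.rpow_le_one (σmem x hx).1 (σmem x hx).2 hp0.le
    linarith
  have fφcont : ContinuousOn fφ (Icc 0 (1/2)) := by
    apply ContinuousOn.rpow_const
    · apply continuousOn_const.sub
      apply σcont.rpow_const
      intro x hx
      exact Or.inr hp0.le
    · intro x hx
      exact Or.inr (by positivity)
  have fφT : fφ (1/2) = 0 := by
    rw [hfφdef]
    simp only [σT, Real.one_rpow, sub_self]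
    exact Real.zero_rpow (by positivity)
  have fφ0 : fφ 0 = 1 := by
    rw [hfφdef]
    simp only [σ0, Real.zero_rpow hpne, sub_zero, Real.one_rpow]
  have fφmem : ∀ x ∈ Icc (0:ℝ) (1/2), 0 ≤ fφ x ∧ fφ x ≤ 1 := by
    intro x hx
    constructor
    · exact Real.rpow_nonneg (wnn x hx) _
    · apply Real.rpow_le_one (wnn x hx) _ (by positivity)
      have : 0 ≤ σ x ^ p := Real.rpow_nonneg (σmem x hx).1 _
      linarith
  have fφderiv : ∀ x ∈ Ioo (0:ℝ) (1/2), HasDerivAt fφ (-(hφ x)) x := by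
    intro x hx
    have hu := σIoo x hx
    have hw := wpos x hx
    have h1 : HasDerivAt (fun y : ℝ => σ y ^ p) (p * σ x ^ (p-1) * (L * fφ x)) x := by
      have houter := Real.hasDerivAt_rpow_const (x := σ x) (p := p) (Or.inl (ne_of_gt hu.1))
      exact houter.comp x (σderiv x hx)
    have h2 : HasDerivAt (fun y : ℝ => 1 - σ y ^ p) (-(p * σ x ^ (p-1) * (L * fφ x))) x :=
      h1.const_sub 1
    have houter2 := Real.hasDerivAt_rpow_const (x := 1 - σ x ^ p) (p := 1/p)
      (Or.inl (ne_of_gt hw))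
    have h3 := houter2.comp x h2
    have heq : 1/p * (1 - σ x ^ p) ^ (1/p - 1) * -(p * σ x ^ (p-1) * (L * fφ x)) = -(hφ x) := by
      have hww : (1 - σ x ^ p) ^ (1/p - 1) * (1 - σ x ^ p) ^ (1/p) = (1 - σ x ^ p) ^ ((2-p)/p) := by
        rw [← Real.rpow_add hw]
        congr 1
        field_simp
        ring
      have hfx : fφ x = (1 - σ x ^ p) ^ (1/p) := by rw [hfφdef]
      rw [hhφdef, hfx]
      have expand : 1/p * (1 - σ x ^ p) ^ (1/p - 1) * -(p * σ x ^ (p-1) * (L * (1 - σ x ^ p) ^ (1/p)))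
          = -((1/p * p) * (L * (σ x ^ (p-1) * ((1 - σ x ^ p) ^ (1/p - 1) * (1 - σ x ^ p) ^ (1/p))))) := by
        ring
      rw [expand, hww, one_div, inv_mul_cancel₀ hpne, one_mul]
    rw [heq] at h3
    exact h3
  have hφnn : ∀ x ∈ Icc (0:ℝ) (1/2), 0 ≤ hφ x := by
    intro x hx
    rw [hhφdef]
    have h1 : 0 ≤ σ x ^ (p-1) := Real.rpow_nonneg (σmem x hx).1 _
    have h2 : 0 ≤ (1 - σ x ^ p) ^ ((2-p)/p) := Real.rpow_nonneg (wnn x hx) _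
    positivity
  have hφint : IntervalIntegrable hφ volume 0 (1/2) := by
    apply intervalIntegrable_deriv_of_nonneg (g := fun x => -fφ x)
    · rw [Set.uIcc_of_le (by norm_num : (0:ℝ) ≤ 1/2)]
      exact fφcont.neg
    · intro x hx
      rw [show min (0:ℝ) (1/2) = 0 by norm_num, show max (0:ℝ) (1/2) = 1/2 by norm_num] at hx
      have h := (fφderiv x hx).neg; rw [neg_neg] at h; exact h
    · intro x hx
      rw [show min (0:ℝ) (1/2) = 0 by norm_num, show max (0:ℝ) (1/2) = 1/2 by norm_num] at hx
      exact hφnn x ⟨hx.1.le, hx.2.le⟩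
  have ftc : ∀ u v : ℝ, 0 ≤ u → u ≤ v → v ≤ 1/2 → (∫ x in u..v, hφ x) = fφ u - fφ v := by
    intro u v h1 h2 h3
    have hder : ∀ x ∈ Ioo u v, HasDerivAt (fun y => -fφ y) (hφ x) x := by
      intro x hx
      have h := (fφderiv x ⟨lt_of_le_of_lt h1 hx.1, lt_of_lt_of_le hx.2 h3⟩).neg; rw [neg_neg] at h; exact h
    have hcont : ContinuousOn (fun y => -fφ y) (Icc u v) :=
      (fφcont.neg).mono (Icc_subset_Icc h1 h3)
    have hint : IntervalIntegrable hφ volume u v := by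
      apply hφint.mono_set
      rw [Set.uIcc_of_le h2, Set.uIcc_of_le (by norm_num : (0:ℝ) ≤ 1/2)]
      exact Icc_subset_Icc h1 h3
    have := integral_eq_sub_of_hasDerivAt_of_le h2 hcont hder hint
    linarith [this]
  -- derivative formulas
  have dleft : ∀ x ∈ Ioo (0:ℝ) (1/2), deriv s (L * x) = fφ x := by
    intro x hx
    have h := sderiv (L * x) (hmapsIoo x hx)
    rw [h.deriv, hfφdef]
  have dright : ∀ x ∈ Ioo (1/2:ℝ) 1, deriv s (L * x) = -(fφ (1 - x)) := by
    intro x hx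
    have hx' : 1 - x ∈ Ioo (0:ℝ) (1/2) := ⟨by linarith [hx.2], by linarith [hx.1]⟩
    have hd := sderiv (L * (1 - x)) (hmapsIoo _ hx')
    have he : L * (1 - x) = 2 * c - L * x := by rw [hLdef]; ring
    rw [he] at hd
    have hinner : HasDerivAt (fun v : ℝ => 2 * c - v) (-1) (L * x) := by
      simpa using (hasDerivAt_id (L * x)).const_sub (2 * c)
    have hcomp := HasDerivAt.comp (L * x) hd hinner
    have hfuneq : (s ∘ fun v : ℝ => 2 * c - v) = s := by
      funext v
      simp only [Function.comp]
      exact srefl v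
    rw [hfuneq] at hcomp
    rw [hcomp.deriv, hfφdef]
    simp only [hσdef]
    rw [he]
    ring
  -- the density of coefficients
  set A : ℕ → ℝ := fun j => ∫ x in (0:ℝ)..1, deriv s (L * x) * Real.cos (j * π * x) with hAdef
  -- case estimates
  obtain ⟨CE, hCE0, ε, hε0, hε1, hEst⟩ : ∃ CE : ℝ, 0 ≤ CE ∧ ∃ ε : ℝ, 0 < ε ∧ ε ≤ 1 ∧
      ∀ j : ℕ, 2 ≤ j → ∀ K : ℝ → ℝ, Continuous K → (∀ x, |K x| ≤ 1) →
        (∀ x, K (x + ((j:ℝ))⁻¹) = -K x) →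
        |∫ x in (0:ℝ)..(1/2), hφ x * K x| ≤ CE * (((j:ℝ))⁻¹) ^ ε := by
    have hδfacts : ∀ j : ℕ, 2 ≤ j → 0 < ((j:ℝ))⁻¹ ∧ ((j:ℝ))⁻¹ ≤ 1/2 := by
      intro j hj
      have hjR : (2:ℝ) ≤ (j:ℝ) := by exact_mod_cast hj
      constructor
      · have : (0:ℝ) < (j:ℝ) := by linarith
        positivity
      · rw [show (1:ℝ)/2 = ((2:ℝ))⁻¹ by norm_num]
        exact inv_anti₀ (by norm_num) hjR
    rcases lt_or_ge p 2 with hp2 | hp2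
    · -- p < 2 : product decomposition
      refine ⟨2 * L, by positivity, 1, one_pos, le_rfl, ?_⟩
      intro j hj K hKc hKb hKs
      obtain ⟨hδpos, hδT⟩ := hδfacts j hj
      have hEq : (∫ x in (0:ℝ)..(1/2), hφ x * K x)
          = ∫ x in (0:ℝ)..(1/2), ((fun x => L * σ x ^ (p-1)) x * (fun x => (1 - σ x ^ p) ^ ((2-p)/p)) x) * K x := by
        apply intervalIntegral.integral_congr
        intro x hx
        simp only [hhφdef]
        ring
      have hφfc : ContinuousOn (fun x => L * σ x ^ (p-1)) (Icc 0 (1/2)) :=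
        continuousOn_const.mul (σcont.rpow_const (fun x hx => Or.inr (by linarith)))
      have hψfc : ContinuousOn (fun x => (1 - σ x ^ p) ^ ((2-p)/p)) (Icc 0 (1/2)) := by
        apply ContinuousOn.rpow_const
        · exact continuousOn_const.sub (σcont.rpow_const (fun x hx => Or.inr hp0.le))
        · intro x hx
          exact Or.inr (div_nonneg (by linarith) hp0.le)
      have hφfm : MonotoneOn (fun x => L * σ x ^ (p-1)) (Icc 0 (1/2)) := by
        intro x hx y hy hxy
        exact mul_le_mul_of_nonneg_left
          (Real.rpow_le_rpow (σmem x hx).1 (σmono hx hy hxy) (by linarith)) hLpos.le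
      have hψfm : AntitoneOn (fun x => (1 - σ x ^ p) ^ ((2-p)/p)) (Icc 0 (1/2)) := by
        intro x hx y hy hxy
        apply Real.rpow_le_rpow (wnn y hy) _ (div_nonneg (by linarith) hp0.le)
        have : σ x ^ p ≤ σ y ^ p := Real.rpow_le_rpow (σmem x hx).1 (σmono hx hy hxy) hp0.le
        linarith
      have hφfb : ∀ x ∈ Icc (0:ℝ) (1/2), 0 ≤ L * σ x ^ (p-1) ∧ L * σ x ^ (p-1) ≤ L := by
        intro x hx
        have h1 : 0 ≤ σ x ^ (p-1) := Real.rpow_nonneg (σmem x hx).1 _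
        have h2 : σ x ^ (p-1) ≤ 1 := Real.rpow_le_one (σmem x hx).1 (σmem x hx).2 (by linarith)
        constructor
        · positivity
        · nlinarith
      have hψfb : ∀ x ∈ Icc (0:ℝ) (1/2),
          0 ≤ (1 - σ x ^ p) ^ ((2-p)/p) ∧ (1 - σ x ^ p) ^ ((2-p)/p) ≤ 1 := by
        intro x hx
        constructor
        · exact Real.rpow_nonneg (wnn x hx) _
        · apply Real.rpow_le_one (wnn x hx) _ (div_nonneg (by linarith) hp0.le)
          have : 0 ≤ σ x ^ p := Real.rpow_nonneg (σmem x hx).1 _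
          linarith
      rw [hEq]
      have hres := shift_prod (fun x => L * σ x ^ (p-1)) (fun x => (1 - σ x ^ p) ^ ((2-p)/p)) K
        hδpos hδT hLpos.le hφfc hψfc hφfm hψfm hφfb hψfb hKc hKb hKs
      calc |∫ x in (0:ℝ)..(1/2), ((fun x => L * σ x ^ (p-1)) x * (fun x => (1 - σ x ^ p) ^ ((2-p)/p)) x) * K x|
          ≤ 2 * (L * ((j:ℝ))⁻¹) := hres
        _ = 2 * L * (((j:ℝ))⁻¹) ^ (1:ℝ) := by rw [Real.rpow_one]; ring
    · -- 2 ≤ p : monotone case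
      have hp1pos : (0:ℝ) < p - 1 := by linarith
      have hbase : (0:ℝ) < (p-1)/p * L * p ^ (1/p) :=
        mul_pos (mul_pos (div_pos hp1pos hp0) hLpos) (Real.rpow_pos_of_pos hp0 _)
      have hCHpos : 0 ≤ p ^ (1/p) * ((p-1)/p * L * p ^ (1/p)) ^ (1/(p-1)) :=
        le_of_lt (mul_pos (Real.rpow_pos_of_pos hp0 _) (Real.rpow_pos_of_pos hbase _))
      refine ⟨p ^ (1/p) * ((p-1)/p * L * p ^ (1/p)) ^ (1/(p-1)), hCHpos, 1/(p-1),
        by positivity, by rw [div_le_one hp1pos]; linarith, ?_⟩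
      intro j hj K hKc hKb hKs
      obtain ⟨hδpos, hδT⟩ := hδfacts j hj
      have hmono_hφ : MonotoneOn hφ (Ioo 0 (1/2)) := by
        intro x hx y hy hxy
        have hu1 := σIoo x hx
        have hu2 := σIoo y hy
        have hσle : σ x ≤ σ y := σmono ⟨hx.1.le, hx.2.le⟩ ⟨hy.1.le, hy.2.le⟩ hxy
        have f1 : σ x ^ (p-1) ≤ σ y ^ (p-1) := Real.rpow_le_rpow hu1.1.le hσle (by linarith)
        have hwx := wpos x hx
        have hwy := wpos y hy
        have hwle : 1 - σ y ^ p ≤ 1 - σ x ^ p := by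
          have : σ x ^ p ≤ σ y ^ p := Real.rpow_le_rpow hu1.1.le hσle hp0.le
          linarith
        have hexp : (2-p)/p ≤ 0 := div_nonpos_of_nonpos_of_nonneg (by linarith) hp0.le
        have f2 : (1 - σ x ^ p) ^ ((2-p)/p) ≤ (1 - σ y ^ p) ^ ((2-p)/p) :=
          Real.rpow_le_rpow_of_nonpos hwy hwle hexp
        simp only [hhφdef]
        apply mul_le_mul_of_nonneg_left _ hLpos.le
        apply mul_le_mul f1 f2 (Real.rpow_nonneg hwx.le _) (Real.rpow_nonneg hu2.1.le _)
      have hres := shift_mono hφ K hδpos hδT hφint hKc hKb hKs hmono_hφ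
        (fun x hx => hφnn x ⟨hx.1.le, hx.2.le⟩)
      have hholder := holder_bound (T := 1/2) σ hp hLpos (by norm_num) σcont σT σmem σlt σderiv
      have hftc : (∫ x in (1/2 - ((j:ℝ))⁻¹)..(1/2:ℝ), hφ x)
          = fφ (1/2 - ((j:ℝ))⁻¹) - fφ (1/2) :=
        ftc _ _ (by linarith) (by linarith) le_rfl
      have hfb := hholder (1/2 - ((j:ℝ))⁻¹) ⟨by linarith, by linarith⟩
      have he : (1/2 : ℝ) - (1/2 - ((j:ℝ))⁻¹) = ((j:ℝ))⁻¹ := by ring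
      rw [he] at hfb
      have hfφeq : fφ (1/2 - ((j:ℝ))⁻¹) = (1 - σ (1/2 - ((j:ℝ))⁻¹) ^ p) ^ (1/p) := by
        rw [hfφdef]
      calc |∫ x in (0:ℝ)..(1/2), hφ x * K x|
          ≤ ∫ x in (1/2 - ((j:ℝ))⁻¹)..(1/2:ℝ), hφ x := hres
        _ = fφ (1/2 - ((j:ℝ))⁻¹) - fφ (1/2) := hftc
        _ = fφ (1/2 - ((j:ℝ))⁻¹) := by rw [fφT, sub_zero]
        _ ≤ (p ^ (1/p) * ((p-1)/p * L * p ^ (1/p)) ^ (1/(p-1))) * (((j:ℝ))⁻¹) ^ (1/(p-1)) := by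
            rw [hfφeq]
            exact hfb
  -- per-j bound
  have hbound : ∀ j : ℕ, 2 ≤ j → |2 * A j| ≤ (4 * CE / π) * ((j:ℝ)) ^ (-(1+ε)) := by
    intro j hj
    have hjR : (2:ℝ) ≤ (j:ℝ) := by exact_mod_cast hj
    have hjpos : (0:ℝ) < (j:ℝ) := by linarith
    have hjne : ((j:ℝ)) ≠ 0 := ne_of_gt hjpos
    have hπ : (0:ℝ) < π := Real.pi_pos
    -- kernels
    have hK1c : Continuous (fun x : ℝ => Real.sin ((j:ℝ) * π * x)) :=
      Real.continuous_sin.comp (continuous_const.mul continuous_id)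
    have hK2c : Continuous (fun x : ℝ => Real.sin ((j:ℝ) * π * (1 - x))) :=
      Real.continuous_sin.comp (continuous_const.mul (continuous_const.sub continuous_id))
    have hK1b : ∀ x : ℝ, |Real.sin ((j:ℝ) * π * x)| ≤ 1 := fun x => Real.abs_sin_le_one _
    have hK2b : ∀ x : ℝ, |Real.sin ((j:ℝ) * π * (1 - x))| ≤ 1 := fun x => Real.abs_sin_le_one _
    have hK1s : ∀ x : ℝ, Real.sin ((j:ℝ) * π * (x + ((j:ℝ))⁻¹)) = -Real.sin ((j:ℝ) * π * x) := by
      intro x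
      have he : (j:ℝ) * π * (x + ((j:ℝ))⁻¹) = (j:ℝ) * π * x + π := by
        field_simp
      rw [he, Real.sin_add_pi]
    have hK2s : ∀ x : ℝ, Real.sin ((j:ℝ) * π * (1 - (x + ((j:ℝ))⁻¹)))
        = -Real.sin ((j:ℝ) * π * (1 - x)) := by
      intro x
      have he : (j:ℝ) * π * (1 - (x + ((j:ℝ))⁻¹)) = (j:ℝ) * π * (1 - x) - π := by
        field_simp
        ring
      rw [he, Real.sin_sub_pi]
    -- IBP identities
    have hB := kernel_bound fφ hφ (1/2) ((j:ℝ) * π) 0 (by norm_num) fφcont fφderiv hφint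
      (by positivity) Real.sin_zero (by rw [fφT, zero_mul])
    simp only [add_zero] at hB
    have hR := kernel_bound fφ hφ (1/2) (-((j:ℝ) * π)) ((j:ℝ) * π) (by norm_num) fφcont fφderiv
      hφint (neg_ne_zero.mpr (by positivity)) (Real.sin_nat_mul_pi j) (by rw [fφT, zero_mul])
    have hrw : ∀ x : ℝ, -((j:ℝ) * π) * x + (j:ℝ) * π = (j:ℝ) * π * (1 - x) := fun x => by ring
    simp only [hrw] at hR
    -- estimates
    have hE1 := hEst j hj (fun x => Real.sin ((j:ℝ) * π * x)) hK1c hK1b hK1s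
    have hE2 := hEst j hj (fun x => Real.sin ((j:ℝ) * π * (1 - x))) hK2c hK2b hK2s
    -- decomposition of A j
    have hcos1 : Continuous (fun x : ℝ => Real.cos ((j:ℝ) * π * x)) :=
      Real.continuous_cos.comp (continuous_const.mul continuous_id)
    have hq1c : ContinuousOn (fun x => fφ x * Real.cos ((j:ℝ) * π * x)) (Icc 0 (1/2)) :=
      fφcont.mul hcos1.continuousOn
    have hfφ1c : ContinuousOn (fun x : ℝ => fφ (1 - x)) (Icc (1/2:ℝ) 1) := by
      apply fφcont.comp (continuous_const.sub continuous_id).continuousOn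
      intro x hx
      show 1 - x ∈ Icc (0:ℝ) (1/2)
      exact ⟨by linarith [hx.2], by linarith [hx.1]⟩
    have hq2c : ContinuousOn (fun x : ℝ => -(fφ (1 - x) * Real.cos ((j:ℝ) * π * x)))
        (Icc (1/2:ℝ) 1) := (hfφ1c.mul hcos1.continuousOn).neg
    have i1 : IntegrableOn (fun x => deriv s (L * x) * Real.cos ((j:ℝ) * π * x))
        (Ioc 0 (1/2)) volume := by
      rw [integrableOn_Ioc_iff_integrableOn_Ioo]
      apply IntegrableOn.congr_fun
        ((hq1c.integrableOn_Icc).mono_set Ioo_subset_Icc_self) _ measurableSet_Ioo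
      intro x hx
      show fφ x * Real.cos ((j:ℝ) * π * x) = deriv s (L * x) * Real.cos ((j:ℝ) * π * x)
      rw [dleft x hx]
    have i2 : IntegrableOn (fun x => deriv s (L * x) * Real.cos ((j:ℝ) * π * x))
        (Ioc (1/2:ℝ) 1) volume := by
      rw [integrableOn_Ioc_iff_integrableOn_Ioo]
      apply IntegrableOn.congr_fun
        ((hq2c.integrableOn_Icc).mono_set Ioo_subset_Icc_self) _ measurableSet_Ioo
      intro x hx
      show -(fφ (1 - x) * Real.cos ((j:ℝ) * π * x)) = deriv s (L * x) * Real.cos ((j:ℝ) * π * x)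
      rw [dright x hx]
      ring
    have iF : IntervalIntegrable (fun x => deriv s (L * x) * Real.cos ((j:ℝ) * π * x))
        volume 0 1 := by
      rw [intervalIntegrable_iff_integrableOn_Ioc_of_le (by norm_num : (0:ℝ) ≤ 1)]
      rw [show Ioc (0:ℝ) 1 = Ioc 0 (1/2) ∪ Ioc (1/2) 1 from
        (Ioc_union_Ioc_eq_Ioc (by norm_num) (by norm_num)).symm]
      exact i1.union i2
    have hII1 : IntervalIntegrable (fun x => deriv s (L * x) * Real.cos ((j:ℝ) * π * x))
        volume 0 (1/2) := by
      rw [intervalIntegrable_iff_integrableOn_Ioc_of_le (by norm_num : (0:ℝ) ≤ 1/2)]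
      exact i1
    have hII2 : IntervalIntegrable (fun x => deriv s (L * x) * Real.cos ((j:ℝ) * π * x))
        volume (1/2) 1 := by
      rw [intervalIntegrable_iff_integrableOn_Ioc_of_le (by norm_num : (1/2:ℝ) ≤ 1)]
      exact i2
    have hsplit : A j = (∫ x in (0:ℝ)..(1/2), deriv s (L * x) * Real.cos ((j:ℝ) * π * x))
        + ∫ x in (1/2:ℝ)..1, deriv s (L * x) * Real.cos ((j:ℝ) * π * x) := by
      rw [hAdef]
      exact (integral_add_adjacent_intervals hII1 hII2).symm
    have e1 : (∫ x in (0:ℝ)..(1/2), deriv s (L * x) * Real.cos ((j:ℝ) * π * x))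
        = ∫ x in (0:ℝ)..(1/2), fφ x * Real.cos ((j:ℝ) * π * x) := by
      apply intervalIntegral.integral_congr_ae
      filter_upwards [aeneq (1/2:ℝ)] with x hx hxI
      rw [Set.uIoc_of_le (by norm_num : (0:ℝ) ≤ 1/2)] at hxI
      rw [dleft x ⟨hxI.1, lt_of_le_of_ne hxI.2 hx⟩]
    have e2 : (∫ x in (1/2:ℝ)..1, deriv s (L * x) * Real.cos ((j:ℝ) * π * x))
        = ∫ x in (1/2:ℝ)..1, -(fφ (1 - x) * Real.cos ((j:ℝ) * π * x)) := by
      apply intervalIntegral.integral_congr_ae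
      filter_upwards [aeneq (1:ℝ)] with x hx hxI
      rw [Set.uIoc_of_le (by norm_num : (1/2:ℝ) ≤ 1)] at hxI
      rw [dright x ⟨hxI.1, lt_of_le_of_ne hxI.2 hx⟩]
      ring
    have e3 : (∫ x in (1/2:ℝ)..1, -(fφ (1 - x) * Real.cos ((j:ℝ) * π * x)))
        = - ∫ x in (0:ℝ)..(1/2), fφ x * Real.cos ((j:ℝ) * π * (1 - x)) := by
      have h := integral_comp_sub_left (a := (1/2:ℝ)) (b := 1)
        (fun u => -(fφ u * Real.cos ((j:ℝ) * π * (1 - u)))) 1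
      norm_num at h
      rw [intervalIntegral.integral_neg, h]
    have hAj : A j = (∫ x in (0:ℝ)..(1/2), fφ x * Real.cos ((j:ℝ) * π * x))
        - ∫ x in (0:ℝ)..(1/2), fφ x * Real.cos ((j:ℝ) * π * (1 - x)) := by
      rw [hsplit, e1, e2, e3]
      ring
    -- combine
    have habs1 : |∫ x in (0:ℝ)..(1/2), fφ x * Real.cos ((j:ℝ) * π * x)|
        ≤ (1 / ((j:ℝ) * π)) * (CE * (((j:ℝ))⁻¹) ^ ε) := by
      rw [hB, abs_mul, abs_of_pos (by positivity : (0:ℝ) < 1 / ((j:ℝ) * π))]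
      exact mul_le_mul_of_nonneg_left hE1 (by positivity)
    have habs2 : |∫ x in (0:ℝ)..(1/2), fφ x * Real.cos ((j:ℝ) * π * (1 - x))|
        ≤ (1 / ((j:ℝ) * π)) * (CE * (((j:ℝ))⁻¹) ^ ε) := by
      rw [hR, abs_mul]
      have : |1 / -((j:ℝ) * π)| = 1 / ((j:ℝ) * π) := by
        rw [abs_div, abs_neg, abs_one, abs_of_pos (by positivity : (0:ℝ) < (j:ℝ) * π)]
      rw [this]
      exact mul_le_mul_of_nonneg_left hE2 (by positivity)
    have hAle : |A j| ≤ (2 / ((j:ℝ) * π)) * (CE * (((j:ℝ))⁻¹) ^ ε) := by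
      rw [hAj]
      calc |(∫ x in (0:ℝ)..(1/2), fφ x * Real.cos ((j:ℝ) * π * x))
          - ∫ x in (0:ℝ)..(1/2), fφ x * Real.cos ((j:ℝ) * π * (1 - x))|
          ≤ |∫ x in (0:ℝ)..(1/2), fφ x * Real.cos ((j:ℝ) * π * x)|
            + |∫ x in (0:ℝ)..(1/2), fφ x * Real.cos ((j:ℝ) * π * (1 - x))| := abs_sub _ _
        _ ≤ (1 / ((j:ℝ) * π)) * (CE * (((j:ℝ))⁻¹) ^ ε)
            + (1 / ((j:ℝ) * π)) * (CE * (((j:ℝ))⁻¹) ^ ε) := add_le_add habs1 habs2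
        _ = (2 / ((j:ℝ) * π)) * (CE * (((j:ℝ))⁻¹) ^ ε) := by ring
    have hpow : ((j:ℝ))⁻¹ * (((j:ℝ))⁻¹) ^ ε = ((j:ℝ)) ^ (-(1+ε)) := by
      rw [Real.inv_rpow hjpos.le, ← Real.rpow_neg hjpos.le, ← Real.rpow_neg_one ((j:ℝ)),
        ← Real.rpow_add hjpos]
      congr 1
      ring
    calc |2 * A j| = 2 * |A j| := by rw [abs_mul]; norm_num
      _ ≤ 2 * ((2 / ((j:ℝ) * π)) * (CE * (((j:ℝ))⁻¹) ^ ε)) := by linarith [hAle]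
      _ = (4 * CE / π) * (((j:ℝ))⁻¹ * (((j:ℝ))⁻¹) ^ ε) := by
          field_simp
          ring
      _ = (4 * CE / π) * ((j:ℝ)) ^ (-(1+ε)) := by rw [hpow]
  -- assemble
  have hmain : Summable (fun j : ℕ => (4 * CE / π) * ((j:ℝ)) ^ (-(1+ε))) :=
    ((Real.summable_nat_rpow).mpr (by linarith)).mul_left _
  have hs2 : Summable (fun n : ℕ => (4 * CE / π) * (((n+2 : ℕ)):ℝ) ^ (-(1+ε))) :=
    (summable_nat_add_iff 2).mpr hmain
  have hsum2 : Summable (fun n : ℕ => |2 * A (n+2)|) :=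
    Summable.of_nonneg_of_le (fun n => abs_nonneg _) (fun n => hbound (n+2) (by omega)) hs2
  have hfinal : Summable (fun j : ℕ => |2 * A j|) := (summable_nat_add_iff 2).mp hsum2
  have hgoal : (fun j : ℕ => |2 * ∫ x in (0:ℝ)..1, deriv s (L * x) * Real.cos (j * π * x)|)
      = fun j : ℕ => |2 * A j| := by
    funext j
    simp only [hAdef]
  rw [hgoal]
  exact hfinal

end Main
end

section
/- ζ(3/2) < (2/√π)·(2√2 arctan(1/√2) + π²/6 + t₀²/4 − (t₀−1)²/(2(e−1)²) − (t₀(e−2)+1)/(e−1)), where t₀ = 2(e²−3e+1)/(e²−2e−1). -/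
open Real

-- arctan lower bound
lemma my_arctan_lower {x : ℝ} (hx : 0 ≤ x) : x - x^3/3 ≤ Real.arctan x := by
  have hderiv : ∀ t : ℝ, HasDerivAt (fun t : ℝ => Real.arctan t - (t - t^3/3))
      (1/(1+t^2) - (1 - t^2)) t := by
    intro t
    have h1 : HasDerivAt (fun t : ℝ => t - t^3/3) (1 - t^2) t := by
      have := ((hasDerivAt_pow 3 t).div_const 3)
      have h2 := (hasDerivAt_id' t).sub this
      refine h2.congr_deriv ?_
      simp
    exact (Real.hasDerivAt_arctan t).sub h1
  have hmono : MonotoneOn (fun t : ℝ => Real.arctan t - (t - t^3/3)) (Set.Ici 0) := by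
    apply monotoneOn_of_deriv_nonneg (convex_Ici 0)
    · exact (Continuous.sub Real.continuous_arctan (by continuity)).continuousOn
    · intro t ht
      exact ((hderiv t).differentiableAt).differentiableWithinAt
    · intro t ht
      rw [(hderiv t).deriv]
      have h1 : (0:ℝ) < 1 + t^2 := by positivity
      rw [sub_nonneg, ← sub_nonneg]
      have : 1/(1+t^2) - (1 - t^2) = t^4/(1+t^2) := by field_simp; ring
      rw [this]; positivity
  have := hmono (Set.mem_Ici.2 le_rfl) (Set.mem_Ici.2 hx) hx
  simpa [Real.arctan_zero] using this

-- x ^ (3/2) = x * sqrt x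
lemma rpow_three_halves {x : ℝ} (hx : 0 ≤ x) : x ^ (3/2 : ℝ) = x * Real.sqrt x := by
  rcases hx.eq_or_lt with h | h
  · rw [← h, Real.zero_rpow (by norm_num), Real.sqrt_zero, mul_zero]
  · rw [show (3/2:ℝ) = 1 + 1/2 by norm_num, Real.rpow_add h, Real.rpow_one,
      ← Real.sqrt_eq_rpow]

-- key telescoping inequality: for real n ≥ 3, 1/(n * √n) ≤ 2/√(n-1) - 2/√n
lemma telescope_ineq {n : ℝ} (hn : 3 ≤ n) :
    1 / (n * Real.sqrt n) ≤ 2 / Real.sqrt (n - 1) - 2 / Real.sqrt n := by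
  have hn0 : (0:ℝ) < n := by linarith
  have hn1 : (0:ℝ) < n - 1 := by linarith
  set a := Real.sqrt (n - 1) with ha'
  set b := Real.sqrt n with hb'
  have ha : 0 < a := Real.sqrt_pos.2 hn1
  have hb : 0 < b := Real.sqrt_pos.2 hn0
  have ha2 : a^2 = n - 1 := Real.sq_sqrt hn1.le
  have hb2 : b^2 = n := Real.sq_sqrt hn0.le
  have hab : a ≤ b := Real.sqrt_le_sqrt (by linarith)
  rw [div_sub_div _ _ ha.ne' hb.ne', div_le_div_iff₀ (by positivity) (by positivity)]
  nlinarith [mul_pos ha hb, mul_pos (mul_pos ha hb) hb, sq_nonneg (a-b),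
    mul_le_mul_of_nonneg_right hab (mul_pos hb hb).le,
    mul_le_mul_of_nonneg_right hab hb.le]

noncomputable def fz : ℕ → ℝ := fun n => 1 / (n : ℝ) ^ (3/2 : ℝ)

lemma fz_nonneg (n : ℕ) : 0 ≤ fz n := by
  unfold fz; positivity

lemma sum_fz_bound (m : ℕ) :
    ∑ i ∈ Finset.range (m + 3), fz i
      ≤ 1 + Real.sqrt 2 / 4 + Real.sqrt 2 - 2 / Real.sqrt ((m : ℝ) + 2) := by
  induction m with
  | zero =>
    have h0 : fz 0 = 0 := by
      unfold fz; simp [Real.zero_rpow]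
    have h1 : fz 1 = 1 := by unfold fz; simp
    have h2 : fz 2 = Real.sqrt 2 / 4 := by
      unfold fz
      rw [show ((2:ℕ):ℝ) = 2 by norm_num, rpow_three_halves (by norm_num)]
      have hs : Real.sqrt 2 * Real.sqrt 2 = 2 := Real.mul_self_sqrt (by norm_num)
      have hs0 : (0:ℝ) < Real.sqrt 2 := Real.sqrt_pos.2 (by norm_num)
      field_simp
      nlinarith [hs]
    have h3 : (2:ℝ) / Real.sqrt ((0:ℝ) + 2) = Real.sqrt 2 := by
      rw [zero_add]
      rw [show (2:ℝ) = Real.sqrt 2 * Real.sqrt 2 from (Real.mul_self_sqrt (by norm_num)).symm]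
      field_simp
      rw [Real.sqrt_sq (Real.sqrt_nonneg _)]
    rw [Finset.sum_range_succ, Finset.sum_range_succ, Finset.sum_range_succ,
      Finset.sum_range_zero, h0, h1, h2]
    push_cast
    rw [h3]
    ring_nf
    linarith
  | succ k ih =>
    rw [Finset.sum_range_succ]
    have hstep : fz (k + 3) ≤ 2 / Real.sqrt ((k:ℝ) + 2) - 2 / Real.sqrt ((k:ℝ) + 3) := by
      have hcast : ((k + 3 : ℕ) : ℝ) = (k : ℝ) + 3 := by push_cast; ring
      have := telescope_ineq (n := (k:ℝ) + 3) (by linarith [Nat.cast_nonneg (α := ℝ) k])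
      unfold fz
      rw [hcast, rpow_three_halves (by positivity)]
      convert this using 4
      ring
    have hcast2 : ((k + 1 : ℕ) : ℝ) + 2 = (k : ℝ) + 3 := by push_cast; ring
    rw [hcast2]
    linarith

lemma zeta_re_le : (riemannZeta (3/2)).re ≤ 1 + Real.sqrt 2 / 4 + Real.sqrt 2 := by
  have hre : ((3:ℂ)/2).re = 3/2 := by norm_num [Complex.div_re]
  have h1 : riemannZeta (3/2) = ∑' n : ℕ, 1 / (n : ℂ) ^ (3/2 : ℂ) :=
    zeta_eq_tsum_one_div_nat_cpow (by rw [hre]; norm_num)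
  have hterm : ∀ n : ℕ, 1 / (n : ℂ) ^ (3/2 : ℂ) = ((fz n : ℝ) : ℂ) := by
    intro n
    unfold fz
    have : ((3:ℂ)/2) = ((3/2 : ℝ) : ℂ) := by push_cast; ring
    rw [this, show ((n:ℂ)) = (((n:ℝ)):ℂ) by push_cast; ring,
      ← Complex.ofReal_cpow (Nat.cast_nonneg n)]
    push_cast
    ring
  have hsum : Summable fz := by
    unfold fz
    exact (Real.summable_one_div_nat_rpow).2 (by norm_num)
  have h2 : (riemannZeta (3/2)).re = ∑' n : ℕ, fz n := by
    rw [h1]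
    simp_rw [hterm]
    rw [← Complex.ofReal_tsum, Complex.ofReal_re]
  rw [h2]
  apply Real.tsum_le_of_sum_range_le fz_nonneg
  intro n
  have hsub : ∑ i ∈ Finset.range n, fz i ≤ ∑ i ∈ Finset.range (n + 3), fz i :=
    Finset.sum_le_sum_of_subset_of_nonneg
      (Finset.range_subset_range.2 (by omega)) (fun i _ _ => fz_nonneg i)
  have h3 := sum_fz_bound n
  have h4 : 0 ≤ 2 / Real.sqrt ((n : ℝ) + 2) := by positivity
  linarith

set_option maxHeartbeats 1000000 in
theorem zeta_three_halves_bound :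
    (riemannZeta (3/2)).re <
      (2 / Real.sqrt π) *
        (2 * Real.sqrt 2 * Real.arctan (1 / Real.sqrt 2) + π^2 / 6 +
          (2 * (Real.exp 1 ^ 2 - 3 * Real.exp 1 + 1) / (Real.exp 1 ^ 2 - 2 * Real.exp 1 - 1))^2 / 4 -
          (2 * (Real.exp 1 ^ 2 - 3 * Real.exp 1 + 1) / (Real.exp 1 ^ 2 - 2 * Real.exp 1 - 1) - 1)^2 /
            (2 * (Real.exp 1 - 1)^2) -
          (2 * (Real.exp 1 ^ 2 - 3 * Real.exp 1 + 1) / (Real.exp 1 ^ 2 - 2 * Real.exp 1 - 1) *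
            (Real.exp 1 - 2) + 1) / (Real.exp 1 - 1)) := by
  have hζ := zeta_re_le
  set x := Real.exp 1 with hx
  have hx1 : 2.7182818283 < x := Real.exp_one_gt_d9
  have hx2 : x < 2.7182818286 := Real.exp_one_lt_d9
  have hπ1 : 3.141592 < π := Real.pi_gt_d6
  have hπ2 : π < 3.141593 := Real.pi_lt_d6
  have hs2 : Real.sqrt 2 * Real.sqrt 2 = 2 := Real.mul_self_sqrt (by norm_num)
  have hs2p : 0 < Real.sqrt 2 := Real.sqrt_pos.2 (by norm_num)
  have hs2u : Real.sqrt 2 < 1.414214 := by nlinarith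
  have hs2l : 1.414213 < Real.sqrt 2 := by nlinarith
  have hsπ : Real.sqrt π * Real.sqrt π = π := Real.mul_self_sqrt Real.pi_pos.le
  have hsπp : 0 < Real.sqrt π := Real.sqrt_pos.2 Real.pi_pos
  have hsπu : Real.sqrt π < 1.772454 := by nlinarith
  have harc : (5:ℝ)/3 ≤ 2 * Real.sqrt 2 * Real.arctan (1 / Real.sqrt 2) := by
    have h := my_arctan_lower (x := 1/Real.sqrt 2) (by positivity)
    have heq : 2 * Real.sqrt 2 * (1/Real.sqrt 2 - (1/Real.sqrt 2)^3/3) = 5/3 := by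
      field_simp
      nlinarith [hs2]
    nlinarith [mul_le_mul_of_nonneg_left h (by positivity : (0:ℝ) ≤ 2*Real.sqrt 2)]
  have hden : 0.95 < x^2 - 2*x - 1 := by nlinarith
  have hden1 : 1.7182818 < x - 1 := by linarith
  set t0 := 2 * (x ^ 2 - 3 * x + 1) / (x ^ 2 - 2 * x - 1) with ht0
  have ht0l : 0.4917 < t0 := by
    rw [ht0, lt_div_iff₀ (by nlinarith)]
    nlinarith
  have ht0u : t0 < 0.4918 := by
    rw [ht0, div_lt_iff₀ (by nlinarith)]
    nlinarith
  have hA1 : 0.0604 ≤ t0^2/4 := by nlinarith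
  have hA2 : (t0 - 1)^2 / (2*(x-1)^2) < 0.04376 := by
    rw [div_lt_iff₀ (by nlinarith)]
    nlinarith
  have hA3 : (t0*(x-2)+1)/(x-1) < 0.7876 := by
    rw [div_lt_iff₀ (by linarith)]
    nlinarith
  have hπsq : 1.644933 < π^2/6 := by nlinarith
  have hS : (2.5406:ℝ) < 2 * Real.sqrt 2 * Real.arctan (1 / Real.sqrt 2) + π^2 / 6 +
      t0^2/4 - (t0 - 1)^2 / (2*(x-1)^2) - (t0*(x-2)+1)/(x-1) := by linarith
  rw [div_mul_eq_mul_div, lt_div_iff₀ hsπp]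
  have hC : (riemannZeta (3/2)).re * Real.sqrt π ≤ 2.76777 * 1.772454 := by
    have hCp : (riemannZeta (3/2)).re ≤ 2.76777 := by nlinarith
    exact mul_le_mul hCp hsπu.le hsπp.le (by norm_num)
  nlinarith [hC, hS]
end
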